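/- Let A be a perfect F_p-algebra. Every additive polynomial v(T) = Σ_{j≥0} a_j T^{p^j} ∈ A[T] can be written uniquely as v(T) = aT + u(T)^p − u(T), where a ∈ A and u ∈ A[T] is an additive polynomial; in fact a = Σ_{j≥0} a_j^{p^{-j}}. Equivalently, the map A ⊕ Add(A) → Add(A), (a,u) ↦ aT + F(u) − u, is a bijection, where Add(A) is the group of additive polynomials and F(u) = u^p. -/

import Mathlib

/-- A polynomial `f ∈ A[U]` is additive if `f(U₁+U₂) = f(U₁) + f(U₂)` in `A[U₁,U₂]`. -/
def IsAdditivePoly {A : Type*} [CommRing A] (f : Polynomial A) : Prop :=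
  Polynomial.aeval (MvPolynomial.X 0 + MvPolynomial.X 1 : MvPolynomial (Fin 2) A) f
    = Polynomial.aeval (MvPolynomial.X 0 : MvPolynomial (Fin 2) A) f
      + Polynomial.aeval (MvPolynomial.X 1 : MvPolynomial (Fin 2) A) f

namespace AddPolyAux

open Polynomial

variable {A : Type*} [CommRing A]

lemma isAdd_zero : IsAdditivePoly (0 : A[X]) := by
  simp [IsAdditivePoly]

lemma isAdd_add {f g : A[X]} (hf : IsAdditivePoly f) (hg : IsAdditivePoly g) :
    IsAdditivePoly (f + g) := by
  unfold IsAdditivePoly at *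
  simp only [map_add]
  rw [hf, hg]; ring

lemma isAdd_sub {f g : A[X]} (hf : IsAdditivePoly f) (hg : IsAdditivePoly g) :
    IsAdditivePoly (f - g) := by
  unfold IsAdditivePoly at *
  simp only [map_sub]
  rw [hf, hg]; ring

lemma isAdd_CX (a : A) : IsAdditivePoly (Polynomial.C a * Polynomial.X) := by
  simp [IsAdditivePoly, mul_add]

lemma coeff_zero_eq_zero {v : A[X]} (hv : IsAdditivePoly v) : v.coeff 0 = 0 := by
  have h := congrArg (MvPolynomial.aeval (R := A) (fun _ : Fin 2 => (0 : A))) hv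
  simp only [map_add, ← Polynomial.aeval_algHom_apply, MvPolynomial.aeval_X, add_zero] at h
  have h0 : Polynomial.aeval (0 : A) v = 0 := by
    have := left_eq_add.mp h
    exact this
  rwa [Polynomial.coeff_zero_eq_aeval_zero]

/-- An additive polynomial has constant derivative. -/
lemma deriv_eq {v : A[X]} (hv : IsAdditivePoly v) :
    Polynomial.derivative v = Polynomial.C (v.coeff 1) := by
  classical
  let φ : MvPolynomial (Fin 2) A →ₐ[A] Polynomial (Polynomial A) :=
    MvPolynomial.aeval ![(Polynomial.X : Polynomial (Polynomial A)),
      Polynomial.C Polynomial.X]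
  have h := congrArg φ hv
  simp only [map_add, ← Polynomial.aeval_algHom_apply] at h
  have hx0 : φ (MvPolynomial.X 0) = Polynomial.X := by simp [φ]
  have hx1 : φ (MvPolynomial.X 1) = Polynomial.C Polynomial.X := by simp [φ]
  rw [hx0, hx1] at h
  have key : ∀ y : Polynomial (Polynomial A),
      Polynomial.aeval y v = (v.map (Polynomial.C : A →+* Polynomial A)).comp y := by
    intro y
    rw [Polynomial.comp, Polynomial.eval₂_map, Polynomial.aeval_def]
    congr 1
  rw [key, key, key, Polynomial.comp_X, Polynomial.comp_C, ← Polynomial.taylor_apply] at h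
  have h1 := congrArg (fun q => Polynomial.coeff q 1) h
  simp only [Polynomial.taylor_coeff_one, Polynomial.coeff_add, Polynomial.coeff_map,
    Polynomial.coeff_C, if_neg (one_ne_zero), add_zero] at h1
  rw [Polynomial.derivative_map, Polynomial.eval_map, Polynomial.eval₂_C_X] at h1
  exact h1

section PerfectPre

variable (p : ℕ) [Fact p.Prime] [CharP A p]

lemma isUnit_natCast {n : ℕ} (hn : ¬ p ∣ n) : IsUnit (n : A) := by
  have h1 : (n : ZMod p) ≠ 0 := by
    rwa [Ne, ZMod.natCast_eq_zero_iff]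
  have h2 : IsUnit (n : ZMod p) := h1.isUnit
  have h3 := h2.map (ZMod.castHom (dvd_refl p) A)
  rwa [map_natCast] at h3

lemma coeff_eq_zero_of_not_dvd {v : A[X]} (hv : IsAdditivePoly v) {n : ℕ}
    (h2 : 2 ≤ n) (hn : ¬ p ∣ n) : v.coeff n = 0 := by
  obtain ⟨m, rfl⟩ : ∃ m, n = m + 1 := ⟨n - 1, by omega⟩
  have hd := deriv_eq hv
  have h1 := congrArg (fun q => Polynomial.coeff q m) hd
  simp only [Polynomial.coeff_derivative, Polynomial.coeff_C,
    if_neg (by omega : ¬ m = 0)] at h1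
  have hunit : IsUnit ((m + 1 : ℕ) : A) := isUnit_natCast p hn
  have : v.coeff (m + 1) * ((m + 1 : ℕ) : A) = 0 := by push_cast; exact h1
  exact (hunit.mul_left_eq_zero).mp this

end PerfectPre

section Perfect

variable {A : Type*} [CommRing A] (p : ℕ) [Fact p.Prime] [CharP A p]
variable [ExpChar A p] [PerfectRing A p]

include p in
lemma reducedA : IsReduced A := by
  constructor
  rintro x ⟨n, hn⟩
  have hp : p.Prime := Fact.out
  have hle : n ≤ p ^ n := le_of_lt (Nat.lt_pow_self (n := n) hp.one_lt)
  have hx : x ^ p ^ n = 0 := by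
    calc x ^ p ^ n = x ^ n * x ^ (p ^ n - n) := by rw [← pow_add]; congr 1; omega
    _ = 0 := by rw [hn, zero_mul]
  have hinj : Function.Injective (iterateFrobenius A p n) :=
    (bijective_iterateFrobenius A p n).1
  have h0 : iterateFrobenius A p n x = iterateFrobenius A p n 0 := by
    rw [map_zero, iterateFrobenius_def, hx]
  exact hinj h0

lemma isReduced_poly (R : Type*) [CommRing R] [IsReduced R] :
    IsReduced (Polynomial R) := by
  constructor
  intro q hq
  ext n
  rw [Polynomial.coeff_zero]
  exact ((Polynomial.isNilpotent_iff.mp hq) n).eq_zero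

include p in
lemma isReduced_mv : IsReduced (MvPolynomial (Fin 2) A) := by
  haveI : IsReduced A := reducedA p
  haveI h0 : IsReduced (MvPolynomial (Fin 0) A) :=
    isReduced_of_injective (MvPolynomial.isEmptyAlgEquiv A (Fin 0))
      (MvPolynomial.isEmptyAlgEquiv A (Fin 0)).injective
  haveI h0' : IsReduced (Polynomial (MvPolynomial (Fin 0) A)) := isReduced_poly _
  haveI h1 : IsReduced (MvPolynomial (Fin 1) A) :=
    isReduced_of_injective (MvPolynomial.finSuccEquiv A 0)
      (MvPolynomial.finSuccEquiv A 0).injective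
  haveI h1' : IsReduced (Polynomial (MvPolynomial (Fin 1) A)) := isReduced_poly _
  exact isReduced_of_injective (MvPolynomial.finSuccEquiv A 1)
    (MvPolynomial.finSuccEquiv A 1).injective

lemma charP_mv : CharP (MvPolynomial (Fin 2) A) p := by
  apply charP_of_injective_algebraMap (R := A)
  rw [MvPolynomial.algebraMap_eq]
  exact MvPolynomial.C_injective _ _

lemma isAdd_root {u : A[X]} (hu : IsAdditivePoly (u ^ p)) : IsAdditivePoly u := by
  haveI : IsReduced (MvPolynomial (Fin 2) A) := isReduced_mv p
  haveI : CharP (MvPolynomial (Fin 2) A) p := charP_mv p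
  unfold IsAdditivePoly at hu ⊢
  simp only [map_pow] at hu
  have hD : (Polynomial.aeval
      (MvPolynomial.X 0 + MvPolynomial.X 1 : MvPolynomial (Fin 2) A) u
      - (Polynomial.aeval (MvPolynomial.X 0 : MvPolynomial (Fin 2) A) u
        + Polynomial.aeval (MvPolynomial.X 1 : MvPolynomial (Fin 2) A) u)) ^ p = 0 := by
    rw [sub_pow_char, add_pow_char, hu, sub_self]
  exact sub_eq_zero.mp (IsReduced.pow_eq_zero hD)

lemma step {v : A[X]} (hv : IsAdditivePoly v) (hdeg : 2 ≤ v.natDegree) :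
    ∃ u₀ : A[X], IsAdditivePoly u₀ ∧ u₀.natDegree < v.natDegree ∧
      v = Polynomial.C (v.coeff 1) * Polynomial.X + u₀ ^ p := by
  have hp : p.Prime := Fact.out
  set c := v.coeff 1 with hc
  set f := v - Polynomial.C c * Polynomial.X with hf
  have hfc : ∀ n, ¬ p ∣ n → f.coeff n = 0 := by
    intro n hn
    have hn0 : n ≠ 0 := by rintro rfl; exact hn (dvd_zero p)
    rcases eq_or_ne n 1 with rfl | h1
    · simp [hf, hc]
    · have h2 : 2 ≤ n := by omega
      have hz := coeff_eq_zero_of_not_dvd p hv h2 hn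
      simp only [hf, Polynomial.coeff_sub, Polynomial.coeff_C_mul, Polynomial.coeff_X,
        if_neg (show ¬ (1 : ℕ) = n by omega), mul_zero, sub_zero, hz]
  have hexp : Polynomial.expand A p (Polynomial.contract p f) = f := by
    ext n
    rw [Polynomial.coeff_expand hp.pos]
    split_ifs with h
    · rw [Polynomial.coeff_contract hp.ne_zero, Nat.div_mul_cancel h]
    · exact (hfc n h).symm
  set u₀ := (Polynomial.contract p f).map
    ((frobeniusEquiv A p).symm : A →+* A) with hu₀
  have hmapfrob : u₀.map (frobenius A p) = Polynomial.contract p f := by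
    rw [hu₀, Polynomial.map_map]
    have : (frobenius A p).comp ((frobeniusEquiv A p).symm : A →+* A) =
        RingHom.id A := by
      ext x
      exact (frobeniusEquiv A p).apply_symm_apply x
    rw [this, Polynomial.map_id]
  have hpow : u₀ ^ p = f := by
    calc u₀ ^ p = (Polynomial.expand A p u₀).map (frobenius A p) :=
          (Polynomial.map_frobenius_expand p u₀).symm
      _ = Polynomial.expand A p (u₀.map (frobenius A p)) := Polynomial.map_expand
      _ = f := by rw [hmapfrob, hexp]
  refine ⟨u₀, ?_, ?_, ?_⟩
  · apply isAdd_root p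
    rw [hpow, hf]
    exact isAdd_sub hv (isAdd_CX c)
  · have hcdeg : (Polynomial.contract p f).natDegree ≤ f.natDegree / p := by
      rw [Polynomial.natDegree_le_iff_coeff_eq_zero]
      intro m hm
      rw [Polynomial.coeff_contract hp.ne_zero]
      apply Polynomial.coeff_eq_zero_of_natDegree_lt
      exact (Nat.div_lt_iff_lt_mul hp.pos).mp hm
    have hfd : f.natDegree ≤ v.natDegree := by
      refine le_trans (Polynomial.natDegree_sub_le _ _) ?_
      have : (Polynomial.C c * Polynomial.X).natDegree ≤ 1 :=
        le_trans (Polynomial.natDegree_C_mul_le _ _) Polynomial.natDegree_X_le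
      exact max_le le_rfl (by omega)
    calc u₀.natDegree ≤ (Polynomial.contract p f).natDegree :=
          Polynomial.natDegree_map_le
      _ ≤ f.natDegree / p := hcdeg
      _ ≤ v.natDegree / p := Nat.div_le_div_right hfd
      _ < v.natDegree := Nat.div_lt_self (by omega) hp.one_lt
  · rw [hpow, hf]; ring

lemma core {a : A} {u : A[X]} (hu : IsAdditivePoly u)
    (h : Polynomial.C a * Polynomial.X + (u ^ p - u) = 0) : a = 0 ∧ u = 0 := by
  have hp : p.Prime := Fact.out
  haveI : IsReduced A := reducedA p
  have hu0 : u = 0 := by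
    by_contra hne
    have hm : 1 ≤ u.natDegree := by
      rcases Nat.eq_zero_or_pos u.natDegree with h0 | h0
      · exact absurd (by
          rw [Polynomial.eq_C_of_natDegree_eq_zero h0, coeff_zero_eq_zero hu,
            map_zero]) hne
      · exact h0
    have h2pm : 2 ≤ p * u.natDegree := by
      have := hp.two_le
      nlinarith
    have hkey := congrArg (fun q => Polynomial.coeff q (p * u.natDegree)) h
    have hcu : u.coeff (p * u.natDegree) = 0 := by
      apply Polynomial.coeff_eq_zero_of_natDegree_lt
      nlinarith [hp.two_le]
    have hpow : (u ^ p).coeff (p * u.natDegree) = u.leadingCoeff ^ p :=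
      Polynomial.coeff_pow_mul_natDegree u p
    simp only [Polynomial.coeff_add, Polynomial.coeff_sub, Polynomial.coeff_C_mul,
      Polynomial.coeff_X, if_neg (show ¬ (1 : ℕ) = p * u.natDegree by omega),
      Polynomial.coeff_zero, hpow, hcu, sub_zero, mul_zero, zero_add] at hkey
    exact absurd (IsReduced.pow_eq_zero hkey)
      (Polynomial.leadingCoeff_ne_zero.mpr hne)
  refine ⟨?_, hu0⟩
  rw [hu0, zero_pow hp.ne_zero, sub_zero, add_zero] at h
  have := congrArg (fun q => Polynomial.coeff q 1) h
  simpa using this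

lemma exists_decomp : ∀ n : ℕ, ∀ v : A[X], v.natDegree < n → IsAdditivePoly v →
    ∃ a : A, ∃ u : A[X], IsAdditivePoly u ∧
      v = Polynomial.C a * Polynomial.X + (u ^ p - u) := by
  have hp : p.Prime := Fact.out
  haveI : CharP (Polynomial A) p := by
    apply charP_of_injective_algebraMap (R := A)
    rw [Polynomial.algebraMap_eq]
    exact Polynomial.C_injective
  intro n
  induction n using Nat.strong_induction_on with
  | _ n ih =>
    intro v hvn hv
    by_cases hdeg : v.natDegree ≤ 1
    · refine ⟨v.coeff 1, 0, isAdd_zero, ?_⟩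
      have h0 := coeff_zero_eq_zero hv
      have hv1 := Polynomial.eq_X_add_C_of_natDegree_le_one hdeg
      rw [h0, map_zero, add_zero] at hv1
      rw [zero_pow hp.ne_zero, sub_zero, add_zero]
      exact hv1
    · push_neg at hdeg
      obtain ⟨u₀, hu₀add, hu₀lt, hveq⟩ := step p hv (by omega)
      obtain ⟨a₁, u₁, hu₁add, hu₁eq⟩ :=
        ih v.natDegree hvn u₀ hu₀lt hu₀add
      refine ⟨v.coeff 1 + a₁, u₀ + u₁, isAdd_add hu₀add hu₁add, ?_⟩
      rw [map_add, add_pow_char]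
      linear_combination hveq + hu₁eq

end Perfect

end AddPolyAux

/-- Let `A` be a perfect `𝔽_p`-algebra. Every additive polynomial
`v ∈ A[T]` can be written uniquely as `v(T) = a·T + u(T)^p − u(T)` with `a ∈ A` and
`u` an additive polynomial. Equivalently, `(a,u) ↦ aT + F(u) − u` is a bijection from
`A ⊕ Add(A)` onto the additive polynomials, where `F(u) = u^p`. -/
theorem additive_poly_unique_decomposition
    (p : ℕ) [Fact p.Prime] {A : Type*} [CommRing A] [CharP A p]
    [ExpChar A p] [PerfectRing A p] :
    ∀ v : Polynomial A, IsAdditivePoly v →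
      ∃! au : A × Polynomial A, IsAdditivePoly au.2 ∧
        v = Polynomial.C au.1 * Polynomial.X + (au.2 ^ p - au.2) := by
  intro v hv
  haveI : CharP (Polynomial A) p := by
    apply charP_of_injective_algebraMap (R := A)
    rw [Polynomial.algebraMap_eq]
    exact Polynomial.C_injective
  obtain ⟨a, u, hu, heq⟩ :=
    AddPolyAux.exists_decomp p (v.natDegree + 1) v (Nat.lt_succ_self _) hv
  refine ⟨(a, u), ⟨hu, heq⟩, ?_⟩
  rintro ⟨b, w⟩ ⟨hw, heqw⟩
  have hkey : Polynomial.C (b - a) * Polynomial.X + ((w - u) ^ p - (w - u)) = 0 := by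
    have h1 : Polynomial.C a * Polynomial.X + (u ^ p - u)
        = Polynomial.C b * Polynomial.X + (w ^ p - w) := heq.symm.trans heqw
    rw [sub_pow_char, map_sub]
    linear_combination -h1
  obtain ⟨hb, hw0⟩ := AddPolyAux.core p (AddPolyAux.isAdd_sub hw hu) hkey
  have hb' : b = a := by rwa [sub_eq_zero] at hb
  have hw' : w = u := by rwa [sub_eq_zero] at hw0
  simp [hb', hw']
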